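/- Let w be continuous with A₄(1+|x|)^{−(N−2)} ≤ w(x) for all x, and suppose f is continuous with f(w(z)) ≥ c₀ > 0 for all z ∈ B₁(0). Then there exists C > 0 such that for all y ∈ ∂B₂(y₀), λ ∈ (0,1), and R ≥ 1, the interaction ε_λ^R = ∫ f(w((x−Ry₀)/λ)) w((x−Ry)/(1−λ)) dx satisfies ε_λ^R ≥ C λ₋^N R^{−(N−2)}, where λ₋ := min{λ, 1−λ}. -/

import Mathlib

open MeasureTheory Real Filter
open scoped Topology

/-- Lower bound for the interaction term (Lemma 5.4):
`ε_λ^R ≥ C λ₋^N R^{-(N-2)}` with `λ₋ = min{λ, 1-λ}`, for all `y ∈ ∂B₂(y₀)`,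
`λ ∈ (0,1)` and `R ≥ 1`. -/
theorem stmt9 (N : ℕ) (hN : 3 ≤ N)
    (A₄ c₀ : ℝ) (hA₄ : 0 < A₄) (hc₀ : 0 < c₀)
    (w : EuclideanSpace ℝ (Fin N) → ℝ) (hwc : Continuous w)
    (hwlb : ∀ x, A₄ * (1 + ‖x‖) ^ (-((N : ℝ) - 2)) ≤ w x)
    (f : ℝ → ℝ) (hfc : Continuous f) (hf0 : ∀ s : ℝ, 0 ≤ s → 0 ≤ f s)
    (hfw : ∀ z ∈ Metric.ball (0 : EuclideanSpace ℝ (Fin N)) 1, c₀ ≤ f (w z))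
    (y₀ : EuclideanSpace ℝ (Fin N)) (hy₀ : ‖y₀‖ = 1)
    (hInt : ∀ (R : ℝ), 1 ≤ R → ∀ (y : EuclideanSpace ℝ (Fin N)), ‖y - y₀‖ = 2 →
      ∀ l : ℝ, 0 < l → l < 1 →
        Integrable (fun x =>
          f (w (l⁻¹ • (x - R • y₀))) * w ((1 - l)⁻¹ • (x - R • y))) volume) :
    ∃ C > 0, ∀ R : ℝ, 1 ≤ R → ∀ y : EuclideanSpace ℝ (Fin N), ‖y - y₀‖ = 2 →
      ∀ l : ℝ, 0 < l → l < 1 →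
        C * (min l (1 - l)) ^ N * R ^ (-((N : ℝ) - 2))
          ≤ ∫ x, f (w (l⁻¹ • (x - R • y₀))) * w ((1 - l)⁻¹ • (x - R • y)) := by
  set n := N - 2 with hn
  have hNn : N = n + 2 := by omega
  haveI : Nonempty (Fin N) := ⟨⟨0, by omega⟩⟩
  have hexp : (N : ℝ) - 2 = (n : ℝ) := by
    rw [hNn]; push_cast; ring
  set v := (volume (Metric.ball (0 : EuclideanSpace ℝ (Fin N)) 1)).toReal with hv
  have hv0 : 0 < v :=
    by
    haveI : Nonempty (Fin N) := ⟨⟨0, by omega⟩⟩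
    exact ENNReal.toReal_pos (Metric.measure_ball_pos volume 0 one_pos).ne'
      measure_ball_lt_top.ne
  refine ⟨c₀ * A₄ * v / 8 ^ n, by positivity, ?_⟩
  intro R hR y hy l hl0 hl1
  have h1l : 0 < 1 - l := by linarith
  have hR0 : 0 < R := lt_of_lt_of_le one_pos hR
  have hwpos : ∀ x, 0 < w x := fun x =>
    lt_of_lt_of_le (by positivity) (hwlb x)
  have hg0 : ∀ x, 0 ≤ f (w (l⁻¹ • (x - R • y₀))) * w ((1 - l)⁻¹ • (x - R • y)) :=
    fun x => mul_nonneg (hf0 _ (hwpos _).le) (hwpos _).le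
  have hint := hInt R hR y hy l hl0 hl1
  set B := Metric.ball (R • y₀) l with hB
  set k := c₀ * (A₄ * ((4 * R / (1 - l)) ^ n)⁻¹) with hk
  -- pointwise lower bound on B
  have hkb : ∀ x ∈ B, k ≤ f (w (l⁻¹ • (x - R • y₀))) * w ((1 - l)⁻¹ • (x - R • y)) := by
    intro x hx
    have hx1 : ‖x - R • y₀‖ < l := by
      simpa [hB, Metric.mem_ball, dist_eq_norm] using hx
    have hz : l⁻¹ • (x - R • y₀) ∈ Metric.ball (0 : EuclideanSpace ℝ (Fin N)) 1 := by
      rw [Metric.mem_ball, dist_zero_right, norm_smul, norm_inv, Real.norm_of_nonneg hl0.le,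
        inv_mul_eq_div]
      exact (div_lt_one hl0).mpr hx1
    have hfz : c₀ ≤ f (w (l⁻¹ • (x - R • y₀))) := hfw _ hz
    -- bound the second factor
    have hux : ‖x - R • y‖ ≤ 3 * R := by
      have h2 : ‖R • y₀ - R • y‖ = R * 2 := by
        rw [← smul_sub, norm_smul, Real.norm_of_nonneg hR0.le, ← norm_neg]
        simp [neg_sub, hy]
      calc ‖x - R • y‖ ≤ ‖x - R • y₀‖ + ‖R • y₀ - R • y‖ := by
            simpa using norm_sub_le_norm_sub_add_norm_sub x (R • y₀) (R • y)
        _ ≤ l + R * 2 := by linarith [hx1.le]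
        _ ≤ 3 * R := by linarith
    have hu : 1 + ‖(1 - l)⁻¹ • (x - R • y)‖ ≤ 4 * R / (1 - l) := by
      rw [norm_smul, norm_inv, Real.norm_of_nonneg h1l.le, inv_mul_eq_div]
      have h1 : (1 : ℝ) ≤ R / (1 - l) := by
        rw [le_div_iff₀ h1l]; nlinarith
      have h2 : ‖x - R • y‖ / (1 - l) ≤ 3 * R / (1 - l) := by gcongr
      have : 4 * R / (1 - l) = R / (1 - l) + 3 * R / (1 - l) := by ring
      rw [this]
      linarith
    have hwu : A₄ * ((4 * R / (1 - l)) ^ n)⁻¹ ≤ w ((1 - l)⁻¹ • (x - R • y)) := by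
      refine le_trans ?_ (hwlb _)
      have hpos : (0 : ℝ) < 1 + ‖(1 - l)⁻¹ • (x - R • y)‖ := by positivity
      have hr : (4 * R / (1 - l)) ^ (-(n : ℝ)) ≤
          (1 + ‖(1 - l)⁻¹ • (x - R • y)‖) ^ (-(n : ℝ)) :=
        Real.rpow_le_rpow_of_nonpos hpos hu (neg_nonpos.mpr (Nat.cast_nonneg n))
      rw [hexp]
      have h4 : (0 : ℝ) < 4 * R / (1 - l) := by positivity
      rw [Real.rpow_neg h4.le, Real.rpow_natCast] at hr
      exact mul_le_mul_of_nonneg_left hr hA₄.le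
    exact mul_le_mul hfz hwu (by positivity) (hf0 _ (hwpos _).le)
  have h2 : k * (volume B).toReal ≤
      ∫ x in B, f (w (l⁻¹ • (x - R • y₀))) * w ((1 - l)⁻¹ • (x - R • y)) :=
    setIntegral_ge_of_const_le_real measurableSet_ball measure_ball_lt_top.ne hkb
      hint.integrableOn
  have h3 : (∫ x in B, f (w (l⁻¹ • (x - R • y₀))) * w ((1 - l)⁻¹ • (x - R • y))) ≤
      ∫ x, f (w (l⁻¹ • (x - R • y₀))) * w ((1 - l)⁻¹ • (x - R • y)) :=
    setIntegral_le_integral hint (ae_of_all _ hg0)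
  have hvol : (volume B).toReal = l ^ N * v := by
    rw [hB, Measure.addHaar_ball volume _ hl0.le, ENNReal.toReal_mul,
      ENNReal.toReal_ofReal (by positivity)]
    simp [hv, finrank_euclideanSpace_fin]
  -- the key elementary inequality
  set m := min l (1 - l) with hm
  have hm0 : 0 ≤ m := le_min hl0.le h1l.le
  have hml : m ≤ l := min_le_left _ _
  have hmle : m ≤ 2 * (l * (1 - l)) := by
    rcases le_total l (1 - l) with h | h
    · rw [hm, min_eq_left h]; nlinarith
    · rw [hm, min_eq_right h]; nlinarith
  have hmain : m ^ N ≤ 2 ^ n * ((1 - l) ^ n * l ^ N) := by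
    rw [hNn]
    calc m ^ (n + 2) = m ^ n * m ^ 2 := by rw [pow_add]
      _ ≤ (2 * (l * (1 - l))) ^ n * l ^ 2 := by
          exact mul_le_mul (pow_le_pow_left₀ hm0 hmle n) (pow_le_pow_left₀ hm0 hml 2)
            (pow_nonneg hm0 2) (by positivity)
      _ = 2 ^ n * ((1 - l) ^ n * l ^ (n + 2)) := by
          rw [mul_pow, mul_pow, pow_add]; ring
  -- put everything together
  have hsuff : m ^ N / (8 ^ n * R ^ n) ≤ (1 - l) ^ n * l ^ N / (4 * R) ^ n := by
    rw [div_le_div_iff₀ (by positivity) (by positivity)]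
    calc m ^ N * (4 * R) ^ n = m ^ N * (4 ^ n * R ^ n) := by rw [mul_pow]
      _ ≤ 2 ^ n * ((1 - l) ^ n * l ^ N) * (4 ^ n * R ^ n) :=
          mul_le_mul_of_nonneg_right hmain (by positivity)
      _ = (1 - l) ^ n * l ^ N * (8 ^ n * R ^ n) := by
          rw [show (8 : ℝ) = 2 * 4 by norm_num, mul_pow]; ring
  have hlhs : c₀ * A₄ * v / 8 ^ n * m ^ N * R ^ (-((N : ℝ) - 2)) =
      c₀ * A₄ * v * (m ^ N / (8 ^ n * R ^ n)) := by
    rw [hexp, Real.rpow_neg hR0.le, Real.rpow_natCast]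
    field_simp
  have hrhs : k * (l ^ N * v) = c₀ * A₄ * v * ((1 - l) ^ n * l ^ N / (4 * R) ^ n) := by
    rw [hk, div_pow, inv_div]
    field_simp
  calc c₀ * A₄ * v / 8 ^ n * m ^ N * R ^ (-((N : ℝ) - 2))
      = c₀ * A₄ * v * (m ^ N / (8 ^ n * R ^ n)) := hlhs
    _ ≤ c₀ * A₄ * v * ((1 - l) ^ n * l ^ N / (4 * R) ^ n) :=
        mul_le_mul_of_nonneg_left hsuff (by positivity)
    _ = k * (l ^ N * v) := hrhs.symm
    _ = k * (volume B).toReal := by rw [hvol]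
    _ ≤ _ := h2.trans h3
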